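/- A group homomorphism φ : H → G is a cover of G (i.e., there exists a class of groups F closed under isomorphism such that φ is an F-cover) if and only if the map φ* : End(H) → Hom(H,G) given by f ↦ φ ∘ f is surjective and every endomorphism f of H with φ ∘ f = φ is an automorphism of H. -/

import Mathlib

/-- φ : H → G is a cover of G (there exists a class F of groups,
closed under isomorphism, such that φ is an F-cover) iff
f ↦ φ∘f : End(H) → Hom(H,G) is surjective and every f ∈ End(H) with φ∘f = φ
is an automorphism of H. -/
theorem cover_characterization {H G : Type} [Group H] [Group G] (φ : H →* G) :
    (∃ F : Set GrpCat,
      (∀ A B : GrpCat, Nonempty (A ≃* B) → A ∈ F → B ∈ F) ∧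
      GrpCat.of H ∈ F ∧
      (∀ K : GrpCat, K ∈ F → ∀ ψ : K →* G, ∃ f : K →* H, φ.comp f = ψ) ∧
      (∀ f : H →* H, φ.comp f = φ → Function.Bijective f)) ↔
    (Function.Surjective (fun f : H →* H => φ.comp f) ∧
      ∀ f : H →* H, φ.comp f = φ → Function.Bijective f) := by
  constructor
  · rintro ⟨F, _, hHF, hpre, hcov⟩
    refine ⟨?_, hcov⟩
    intro ψ
    obtain ⟨f, hf⟩ := hpre (GrpCat.of H) hHF ψ
    exact ⟨f, hf⟩
  · rintro ⟨hsurj, hcov⟩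
    refine ⟨{A | Nonempty (A ≃* GrpCat.of H)}, ?_, ⟨MulEquiv.refl _⟩, ?_, hcov⟩
    · rintro A B ⟨e⟩ ⟨eA⟩
      exact ⟨e.symm.trans eA⟩
    · rintro K ⟨e⟩ ψ
      obtain ⟨g, hg⟩ := hsurj (ψ.comp e.symm.toMonoidHom)
      refine ⟨g.comp e.toMonoidHom, ?_⟩
      ext x
      have := DFunLike.congr_fun hg (e x)
      simpa using this
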